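/- Let A be a countable nonempty alphabet, let μ be a probability mass function on A, let C be a finite maximal prefix code over A, and let x = ⟨x₁, x₂, …⟩ ∈ A^ℕ. Then ∑_{c = ⟨c₁,…,c_n⟩ ∈ C} 2^{|{i ∈ {1,…,n} : c_i ≠ x_i}|} · ∏_{i=1}^{n} μ(c_i)/(2 − μ(x_i)) = 1. -/

import Mathlib

variable {A : Type*}

/-- A prefix code: no element is a (proper) prefix of another element. -/
def IsPrefixCode (C : Set (List A)) : Prop :=
  ∀ p ∈ C, ∀ q ∈ C, p <+: q → p = q

/-- A maximal prefix code: a prefix code not strictly contained in any prefix code. -/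
def IsMaximalPrefixCode (C : Set (List A)) : Prop :=
  IsPrefixCode C ∧ ∀ D : Set (List A), IsPrefixCode D → C ⊆ D → D = C

private theorem prod_concat (g : ℕ → A → ℝ) (l : List A) (a : A) :
    ∏ i : Fin (l ++ [a]).length, g i ((l ++ [a]).get i) =
      (∏ i : Fin l.length, g i (l.get i)) * g l.length a := by
  have h : (l ++ [a]).length = l.length + 1 := by simp
  rw [Fintype.prod_equiv (finCongr h) _
    (fun i : Fin (l.length+1) => g i ((l ++ [a]).get (finCongr h.symm i))) (by intro i; simp)]
  rw [Fin.prod_univ_castSucc]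
  congr 1
  · exact Finset.prod_congr rfl fun i _ => by simp [List.getElem_append]
  · simp

private theorem key [Fintype A] [Nonempty A] [DecidableEq A] (g : ℕ → A → ℝ)
    (hg1 : ∀ n, ∑ a : A, g n a = 1) (N : ℕ) :
    ∀ C : Finset (List A), (∑ c ∈ C, c.length) ≤ N →
    IsPrefixCode (↑C : Set (List A)) → (∀ w : List A, ∃ c ∈ C, c <+: w ∨ w <+: c) →
    ∑ c ∈ C, ∏ i : Fin c.length, g i (c.get i) = 1 := by
  induction N using Nat.strong_induction_on with
  | _ N ih =>
  intro C hlen hpc hcomp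
  by_cases hnil : ([] : List A) ∈ C
  · have hC : C = {([] : List A)} := by
      apply Finset.eq_singleton_iff_unique_mem.2
      exact ⟨hnil, fun d hd => (hpc [] hnil d hd (List.nil_prefix)).symm⟩
    subst hC; simp
  · -- all words nonempty
    have hne : C.Nonempty := by
      obtain ⟨c, hc, -⟩ := hcomp []
      exact ⟨c, hc⟩
    obtain ⟨c₀, hc₀, hmaxlen⟩ := C.exists_max_image List.length hne
    have hc₀ne : c₀ ≠ [] := fun h => hnil (h ▸ hc₀)
    set n := c₀.length with hn
    have hn1 : 1 ≤ n := List.length_pos_iff.2 hc₀ne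
    set p := c₀.dropLast with hp
    have hpc₀ : p <+: c₀ := List.dropLast_prefix c₀
    have hplen : p.length = n - 1 := by simp [hp, hn]
    have hplt : p.length < n := by omega
    have hpnotC : p ∉ C := by
      intro h
      have := hpc p h c₀ hc₀ hpc₀
      rw [this] at hplt; omega
    have hS : ∀ a : A, p ++ [a] ∈ C := by
      intro a
      obtain ⟨d, hd, hcase⟩ := hcomp (p ++ [a])
      have hdlen : d.length ≤ n := hmaxlen d hd
      have hpalen : (p ++ [a]).length = n := by simp [hplen]; omega
      rcases hcase with h1 | h2
      · by_cases hdl : d.length ≤ p.length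
        · have hdp : d <+: p := List.prefix_of_prefix_length_le h1 (List.prefix_append p [a]) hdl
          have : d = c₀ := hpc d hd c₀ hc₀ (hdp.trans hpc₀)
          rw [this] at hdl; omega
        · have : d.length = (p ++ [a]).length := by
            have := h1.length_le; simp at this ⊢; omega
          rw [← h1.eq_of_length this]; exact hd
      · have : (p ++ [a]).length = d.length := by
          have := h2.length_le; omega
        rw [h2.eq_of_length this]; exact hd
    set S : Finset (List A) := Finset.image (fun a => p ++ [a]) Finset.univ with hSdef
    have hinj : ∀ x ∈ (Finset.univ : Finset A), ∀ y ∈ Finset.univ,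
        p ++ [x] = p ++ [y] → x = y := by
      intro x _ y _ h
      simpa using h
    have hSsub : S ⊆ C := by
      intro s hs
      obtain ⟨a, -, rfl⟩ := Finset.mem_image.1 hs
      exact hS a
    have hpS : p ∉ S := by
      intro h
      obtain ⟨a, -, ha⟩ := Finset.mem_image.1 h
      have := congrArg List.length ha; simp at this
    have hmemS : ∀ a : A, p ++ [a] ∈ S := fun a =>
      Finset.mem_image.2 ⟨a, Finset.mem_univ a, rfl⟩
    set C' : Finset (List A) := insert p (C \ S) with hC'def
    have hpCS : p ∉ C \ S := fun h => hpnotC (Finset.mem_sdiff.1 h).1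
    -- sums agree
    have hsum_eq : ∀ f : List A → ℝ, (∀ a : A, f (p ++ [a]) = f p * g p.length a) →
        ∑ c ∈ C', f c = ∑ c ∈ C, f c := by
      intro f hf
      have hSsum : ∑ c ∈ S, f c = f p := by
        rw [hSdef, Finset.sum_image hinj]
        simp_rw [hf]
        rw [← Finset.mul_sum, hg1 p.length, mul_one]
      rw [hC'def, Finset.sum_insert hpCS, ← Finset.sum_sdiff hSsub, hSsum]
      ring
    -- C' is a prefix code
    have hpc' : IsPrefixCode (↑C' : Set (List A)) := by
      intro p' hp' q' hq' hpre
      simp only [hC'def, Finset.coe_insert, Set.mem_insert_iff, Finset.coe_sdiff,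
        Set.mem_diff, Finset.mem_coe] at hp' hq'
      rcases hp' with rfl | ⟨hp'C, hp'S⟩
      · rcases hq' with rfl | ⟨hq'C, hq'S⟩
        · rfl
        · -- p <+: q', q' ∈ C \ S : impossible
          exfalso
          obtain ⟨t, rfl⟩ := hpre
          cases t with
          | nil => exact hpnotC (by simpa using hq'C)
          | cons b t' =>
            have hbel : p ++ [b] <+: p ++ b :: t' := by
              apply (List.prefix_append_right_inj p).2
              exact ⟨t', rfl⟩
            have := hpc (p ++ [b]) (hS b) _ hq'C hbel
            exact hq'S (this ▸ hmemS b)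
      · rcases hq' with rfl | ⟨hq'C, hq'S⟩
        · -- p' <+: p, p' ∈ C
          exfalso
          have heq : p' = c₀ := hpc p' hp'C c₀ hc₀ (hpre.trans hpc₀)
          have hle := hpre.length_le
          rw [heq] at hle
          omega
        · exact hpc p' hp'C q' hq'C hpre
    -- C' is complete
    have hcomp' : ∀ w : List A, ∃ c ∈ C', c <+: w ∨ w <+: c := by
      intro w
      obtain ⟨c, hc, hcase⟩ := hcomp w
      by_cases hcS : c ∈ S
      · obtain ⟨a, -, rfl⟩ := Finset.mem_image.1 hcS
        refine ⟨p, Finset.mem_insert_self _ _, ?_⟩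
        rcases hcase with h1 | h2
        · exact Or.inl ((List.prefix_append p [a]).trans h1)
        · by_cases hwl : w.length ≤ p.length
          · exact Or.inr (List.prefix_of_prefix_length_le h2 (List.prefix_append p [a]) hwl)
          · have hlen2 : w.length = (p ++ [a]).length := by
              have := h2.length_le; simp at this ⊢; omega
            rw [h2.eq_of_length hlen2]
            exact Or.inl (List.prefix_append p [a])
      · exact ⟨c, Finset.mem_insert_of_mem (Finset.mem_sdiff.2 ⟨hc, hcS⟩), hcase⟩
    -- length decrease
    have hlen' : ∑ c ∈ C', c.length < N := by
      have h1 : ∑ c ∈ C \ S, c.length + ∑ c ∈ S, c.length = ∑ c ∈ C, c.length :=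
        Finset.sum_sdiff hSsub
      have h2 : ∑ c ∈ C', c.length = p.length + ∑ c ∈ C \ S, c.length := by
        rw [hC'def, Finset.sum_insert hpCS]
      have h3 : n ≤ ∑ c ∈ S, c.length := by
        obtain ⟨a⟩ := ‹Nonempty A›
        have := Finset.single_le_sum (f := List.length) (fun i _ => Nat.zero_le _) (hmemS a)
        simp [hplen] at this
        omega
      omega
    have := ih _ hlen' C' le_rfl hpc' hcomp'
    rw [← this]
    exact (hsum_eq _ (fun a => by
      rw [prod_concat])).symm

/-- For a probability mass function `μ` on a countable alphabet `A`, a finite maximal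
prefix code `C` and `x ∈ A^ℕ`:
`∑_{c ∈ C} 2^{#{i : cᵢ ≠ xᵢ}} · ∏_{i=1}^{len(c)} μ(cᵢ)/(2 − μ(xᵢ)) = 1`. -/
theorem maximalPrefixCode_measure_weighted_sum_eq_one [Countable A] [Nonempty A]
    [DecidableEq A] (μ : A → NNReal) (hμ : ∑' a : A, μ a = 1)
    (C : Finset (List A)) (hmax : IsMaximalPrefixCode (↑C : Set (List A)))
    (x : ℕ → A) :
    ∑ c ∈ C, (2 : ℝ) ^ (Finset.univ.filter fun i : Fin c.length =>
        c.get i ≠ x i.val).card *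
      ∏ i : Fin c.length, (μ (c.get i) : ℝ) / (2 - (μ (x i.val) : ℝ)) = 1 := by
  have hpc : IsPrefixCode (↑C : Set (List A)) := hmax.1
  have hcomp : ∀ w : List A, ∃ c ∈ C, c <+: w ∨ w <+: c := by
    intro w
    by_contra h
    push_neg at h
    have hD : IsPrefixCode (insert w (↑C : Set (List A))) := by
      intro p hp q hq hpq
      rcases hp with rfl | hp
      · rcases hq with rfl | hq
        · rfl
        · exact absurd hpq (h q hq).2
      · rcases hq with rfl | hq
        · exact absurd hpq (h p hp).1
        · exact hpc p hp q hq hpq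
    have hDC := hmax.2 _ hD (Set.subset_insert w _)
    have hwC : w ∈ C := by
      rw [← Finset.mem_coe, ← hDC]
      exact Set.mem_insert w _
    exact (h w hwC).1 (List.prefix_refl w)
  by_cases hnil : ([] : List A) ∈ C
  · have hC : C = {([] : List A)} := by
      apply Finset.eq_singleton_iff_unique_mem.2
      exact ⟨hnil, fun d hd => (hpc [] hnil d hd List.nil_prefix).symm⟩
    subst hC; simp
  · -- A must be finite
    have : Inhabited A := Classical.inhabited_of_nonempty ‹_›
    have hfin : Finite A := by
      by_contra hinf
      rw [not_finite_iff_infinite] at hinf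
      obtain ⟨a, ha⟩ := Infinite.exists_notMem_finset (C.image List.headI)
      obtain ⟨c, hc, hcase⟩ := hcomp [a]
      apply ha
      rcases hcase with h1 | h2
      · obtain ⟨s, hs⟩ := h1
        cases c with
        | nil => exact absurd hc hnil
        | cons b t =>
          simp only [List.cons_append] at hs
          have hb : b = a := (List.cons.injEq _ _ _ _ ▸ hs).1
          exact Finset.mem_image.2 ⟨b :: t, hc, by simp [hb]⟩
      · obtain ⟨s, hs⟩ := h2
        exact Finset.mem_image.2 ⟨c, hc, by rw [← hs]; simp⟩
    have : Fintype A := Fintype.ofFinite A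
    -- facts about μ
    have hsum : ∑ a : A, (μ a : ℝ) = 1 := by
      have : (∑ a : A, μ a : NNReal) = 1 := by rw [← tsum_fintype (L := SummationFilter.unconditional _)]; exact hμ
      exact_mod_cast congrArg NNReal.toReal this
    have hle1 : ∀ a : A, (μ a : ℝ) ≤ 1 := by
      intro a
      rw [← hsum]
      exact Finset.single_le_sum (fun i _ => (μ i).coe_nonneg) (Finset.mem_univ a)
    have hden : ∀ a : A, (2 : ℝ) - (μ a : ℝ) ≠ 0 := by
      intro a
      have := hle1 a
      intro h; linarith
    set g : ℕ → A → ℝ :=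
      fun n a => (if a = x n then 1 else 2) * (μ a : ℝ) / (2 - (μ (x n) : ℝ)) with hgdef
    have hg1 : ∀ n, ∑ a : A, g n a = 1 := by
      intro n
      rw [hgdef]
      simp only
      rw [← Finset.sum_div]
      rw [div_eq_one_iff_eq (hden (x n))]
      have hterm : ∀ a : A, (if a = x n then 1 else 2) * (μ a : ℝ) =
          (μ a : ℝ) + ((μ a : ℝ) - if a = x n then (μ a : ℝ) else 0) := by
        intro a; by_cases h : a = x n <;> simp [h] <;> ring
      rw [Finset.sum_congr rfl fun a _ => hterm a]
      rw [Finset.sum_add_distrib, Finset.sum_sub_distrib, hsum,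
        Finset.sum_ite_eq' Finset.univ (x n) (fun a => (μ a : ℝ))]
      simp [hsum]
      ring
    have hterm_eq : ∀ c ∈ C,
        (2 : ℝ) ^ (Finset.univ.filter fun i : Fin c.length => c.get i ≠ x i.val).card *
          ∏ i : Fin c.length, (μ (c.get i) : ℝ) / (2 - (μ (x i.val) : ℝ)) =
        ∏ i : Fin c.length, g i (c.get i) := by
      intro c _
      rw [hgdef]
      simp only
      have : ∀ i : Fin c.length,
          (if c.get i = x i.val then (1:ℝ) else 2) * (μ (c.get i) : ℝ) / (2 - (μ (x i.val) : ℝ))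
          = (if c.get i ≠ x i.val then (2:ℝ) else 1) *
            ((μ (c.get i) : ℝ) / (2 - (μ (x i.val) : ℝ))) := by
        intro i
        by_cases h : c.get i = x i.val <;>
          rw [List.get_eq_getElem] at h <;> simp [h] <;> ring
      rw [Finset.prod_congr rfl fun i _ => this i, Finset.prod_mul_distrib]
      congr 1
      rw [Finset.prod_ite, Finset.prod_const, Finset.prod_const]
      simp
    rw [Finset.sum_congr rfl hterm_eq]
    exact key g hg1 (∑ c ∈ C, c.length) C le_rfl hpc hcomp
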